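/- There exists a coloring c : [ℚ]^η → ω of all subsets of ℚ order isomorphic to ℚ into countably many colors such that for every Y ∈ [ℚ]^η, the set [Y]^η of subsets of Y order isomorphic to ℚ witnesses all colors: for every n ∈ ω there is Z ⊆ Y order isomorphic to ℚ with c(Z) = n. -/

import Mathlib

/-- `Y ⊆ ℚ` is order isomorphic to `ℚ`. -/
def QIsoQ (Y : Set ℚ) : Prop :=
  ∃ e : ℚ ≃ Y, ∀ p q : ℚ, p ≤ q ↔ (e p : ℚ) ≤ (e q : ℚ)

/-- A fixed enumeration of the rationals. -/
noncomputable def idxQ : ℚ ≃ ℕ := Denumerable.eqv ℚ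

/-- The coloring: count elements of `Z` that are below the least-indexed element `z₀`
of `Z` and whose index is below the least index of an element of `Z` above `z₀`. -/
noncomputable def colQ (Z : Set ℚ) : ℕ :=
  Set.ncard {i : ℕ | i < sInf (idxQ '' {z | z ∈ Z ∧ idxQ.symm (sInf (idxQ '' Z)) < z}) ∧
    idxQ.symm i ∈ Z ∧ idxQ.symm i < idxQ.symm (sInf (idxQ '' Z))}

lemma qiso_lt {Y : Set ℚ} (e : ℚ ≃ Y) (he : ∀ p q : ℚ, p ≤ q ↔ (e p : ℚ) ≤ (e q : ℚ))
    (p q : ℚ) : p < q ↔ (e p : ℚ) < (e q : ℚ) := by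
  rw [lt_iff_not_ge, lt_iff_not_ge, he]

lemma qiso_between {Y : Set ℚ} (hY : QIsoQ Y) {a b : ℚ} (ha : a ∈ Y) (hb : b ∈ Y)
    (hab : a < b) : {x | x ∈ Y ∧ a < x ∧ x < b}.Infinite := by
  obtain ⟨e, he⟩ := hY
  have hlt := qiso_lt e he
  set α := e.symm ⟨a, ha⟩ with hα
  set β := e.symm ⟨b, hb⟩ with hβ
  have heα : (e α : ℚ) = a := by rw [hα, Equiv.apply_symm_apply]
  have heβ : (e β : ℚ) = b := by rw [hβ, Equiv.apply_symm_apply]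
  have hαβ : α < β := by rw [hlt, heα, heβ]; exact hab
  have hinj : Function.Injective (fun p : ℚ => (e p : ℚ)) :=
    fun p q h => e.injective (Subtype.ext h)
  have himg := (Set.Ioo_infinite hαβ).image hinj.injOn
  refine himg.mono ?_
  rintro x ⟨p, ⟨h1, h2⟩, rfl⟩
  refine ⟨(e p).2, ?_, ?_⟩
  · have := (hlt α p).1 h1; rwa [heα] at this
  · have := (hlt p β).1 h2; rwa [heβ] at this

lemma qiso_below {Y : Set ℚ} (hY : QIsoQ Y) {a : ℚ} (ha : a ∈ Y) :
    {x | x ∈ Y ∧ x < a}.Infinite := by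
  obtain ⟨e, he⟩ := hY
  have hlt := qiso_lt e he
  set α := e.symm ⟨a, ha⟩ with hα
  have heα : (e α : ℚ) = a := by rw [hα, Equiv.apply_symm_apply]
  have hinj : Function.Injective (fun p : ℚ => (e p : ℚ)) :=
    fun p q h => e.injective (Subtype.ext h)
  have himg := (Set.Iio_infinite α).image hinj.injOn
  refine himg.mono ?_
  rintro x ⟨p, h1, rfl⟩
  refine ⟨(e p).2, ?_⟩
  have := (hlt p α).1 h1; rwa [heα] at this

lemma qiso_above {Y : Set ℚ} (hY : QIsoQ Y) {a : ℚ} (ha : a ∈ Y) :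
    {x | x ∈ Y ∧ a < x}.Infinite := by
  obtain ⟨e, he⟩ := hY
  have hlt := qiso_lt e he
  set α := e.symm ⟨a, ha⟩ with hα
  have heα : (e α : ℚ) = a := by rw [hα, Equiv.apply_symm_apply]
  have hinj : Function.Injective (fun p : ℚ => (e p : ℚ)) :=
    fun p q h => e.injective (Subtype.ext h)
  have himg := (Set.Ioi_infinite α).image hinj.injOn
  refine himg.mono ?_
  rintro x ⟨p, h1, rfl⟩
  refine ⟨(e p).2, ?_⟩
  have := (hlt α p).1 h1; rwa [heα] at this

/-- Any subset of a copy of `ℚ` with finite complement (inside the copy) is a copy of `ℚ`. -/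
lemma qiso_sub {Y Z : Set ℚ} (hY : QIsoQ Y) (hZY : Z ⊆ Y) (hfin : (Y \ Z).Finite) :
    QIsoQ Z := by
  obtain ⟨e, he⟩ := hY
  have hy0 : (e 0 : ℚ) ∈ Y := (e 0).2
  have hYinf : Y.Infinite :=
    (qiso_below ⟨e, he⟩ hy0).mono (fun x hx => hx.1)
  have hZinf : Z.Infinite := by
    have := hYinf.diff hfin
    rwa [Set.diff_diff_cancel_left hZY] at this
  have memZ : ∀ {x : ℚ}, x ∈ Y → x ∉ Y \ Z → x ∈ Z := by
    intro x hxY hx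
    by_contra hxZ
    exact hx ⟨hxY, hxZ⟩
  haveI : Nonempty ↥Z := hZinf.nonempty.to_subtype
  haveI : DenselyOrdered ↥Z := by
    constructor
    intro a b hab
    have hab' : (a : ℚ) < (b : ℚ) := hab
    have h1 := (qiso_between ⟨e, he⟩ (hZY a.2) (hZY b.2) hab').diff hfin
    obtain ⟨x, ⟨⟨hxY, hax, hxb⟩, hnd⟩⟩ := h1.nonempty
    exact ⟨⟨x, memZ hxY hnd⟩, hax, hxb⟩
  haveI : NoMinOrder ↥Z := by
    constructor
    intro a
    have h1 := (qiso_below ⟨e, he⟩ (hZY a.2)).diff hfin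
    obtain ⟨x, ⟨⟨hxY, hxa⟩, hnd⟩⟩ := h1.nonempty
    exact ⟨⟨x, memZ hxY hnd⟩, hxa⟩
  haveI : NoMaxOrder ↥Z := by
    constructor
    intro a
    have h1 := (qiso_above ⟨e, he⟩ (hZY a.2)).diff hfin
    obtain ⟨x, ⟨⟨hxY, hxa⟩, hnd⟩⟩ := h1.nonempty
    exact ⟨⟨x, memZ hxY hnd⟩, hxa⟩
  obtain ⟨iso⟩ := Order.iso_of_countable_dense ℚ ↥Z
  exact ⟨iso.toEquiv, fun p q => (iso.le_iff_le).symm.trans Subtype.coe_le_coe.symm⟩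

lemma large_idx {S : Set ℚ} (hS : S.Infinite) (N : ℕ) :
    {x | x ∈ S ∧ N < idxQ x}.Infinite := by
  have hfin : (idxQ ⁻¹' (Set.Iic N)).Finite :=
    Set.Finite.preimage (idxQ.injective.injOn) (Set.finite_Iic N)
  refine (hS.diff hfin).mono ?_
  rintro x ⟨hxS, hx⟩
  exact ⟨hxS, lt_of_not_ge (fun h => hx h)⟩

/-- there is a coloring of `[ℚ]^η` into `ω` colors such that every
`Y ∈ [ℚ]^η` witnesses all colors on its subsets order isomorphic to `ℚ`. -/
theorem coloring_of_Q_copies :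
    ∃ c : Set ℚ → ℕ, ∀ Y : Set ℚ, QIsoQ Y →
      ∀ n : ℕ, ∃ Z ⊆ Y, QIsoQ Z ∧ c Z = n := by
  refine ⟨colQ, fun Y hY n => ?_⟩
  obtain ⟨e, he⟩ := hY
  set y₀ : ℚ := (e 0 : ℚ) with hy₀def
  have hy₀ : y₀ ∈ Y := (e 0).2
  -- choose n points of Y below y₀ with indices above idxQ y₀
  obtain ⟨B, hBsub, hBcard⟩ :=
    (large_idx (qiso_below ⟨e, he⟩ hy₀) (idxQ y₀)).exists_subset_card_eq n
  set M : ℕ := max (idxQ y₀) (B.sup idxQ) with hMdef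
  -- choose w ∈ Y above y₀ with index above everything so far
  obtain ⟨w, ⟨⟨hwY, hy₀w⟩, hMw⟩⟩ := (large_idx (qiso_above ⟨e, he⟩ hy₀) M).nonempty
  set T : Set ℚ := {y | y ∈ Y ∧ idxQ w < idxQ y} with hTdef
  set Z : Set ℚ := insert y₀ (insert w (↑B ∪ T)) with hZdef
  have hBprop : ∀ x ∈ B, x ∈ Y ∧ x < y₀ ∧ idxQ y₀ < idxQ x := by
    intro x hx
    have := hBsub hx
    exact ⟨this.1.1, this.1.2, this.2⟩
  have hZY : Z ⊆ Y := by
    intro z hz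
    rcases hz with rfl | rfl | hz | hz
    · exact hy₀
    · exact hwY
    · exact (hBprop z hz).1
    · exact hz.1
  have hZw : ∀ z ∈ Z, z ≠ w → z ≠ y₀ → z ∉ (↑B : Set ℚ) → idxQ w < idxQ z := by
    intro z hz h1 h2 h3
    rcases hz with rfl | rfl | hz | hz
    · exact absurd rfl h2
    · exact absurd rfl h1
    · exact absurd hz h3
    · exact hz.2
  have hdiff : (Y \ Z).Finite := by
    apply Set.Finite.subset (Set.Finite.preimage (idxQ.injective.injOn)
      (Set.finite_Iic (idxQ w)))
    rintro y ⟨hyY, hyZ⟩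
    by_contra h
    exact hyZ (Or.inr (Or.inr (Or.inr ⟨hyY, lt_of_not_ge (fun h' => h h')⟩)))
  have hsupB : ∀ x ∈ B, idxQ x < idxQ w := by
    intro x hx
    exact lt_of_le_of_lt (le_trans (Finset.le_sup (f := idxQ) hx) (le_max_right _ _)) hMw
  have hy₀w_idx : idxQ y₀ < idxQ w := lt_of_le_of_lt (le_max_left _ _) hMw
  -- least index in Z is that of y₀
  have hy₀Z : y₀ ∈ Z := Or.inl rfl
  have hwZ : w ∈ Z := Or.inr (Or.inl rfl)
  have hlow : ∀ z ∈ Z, idxQ y₀ ≤ idxQ z := by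
    intro z hz
    rcases hz with rfl | rfl | hz | hz
    · exact le_refl _
    · exact le_of_lt hy₀w_idx
    · exact le_of_lt (hBprop z hz).2.2
    · exact le_of_lt (lt_trans hy₀w_idx hz.2)
  have hk : sInf (idxQ '' Z) = idxQ y₀ := by
    refine le_antisymm (Nat.sInf_le ⟨y₀, hy₀Z, rfl⟩) ?_
    have hne : (idxQ '' Z).Nonempty := ⟨idxQ y₀, y₀, hy₀Z, rfl⟩
    obtain ⟨z, hz, hzi⟩ := Nat.sInf_mem hne
    rw [← hzi]
    exact hlow z hz
  have hz₀ : idxQ.symm (sInf (idxQ '' Z)) = y₀ := by rw [hk, Equiv.symm_apply_apply]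
  -- least index among elements of Z above y₀ is that of w
  have hm : sInf (idxQ '' {z | z ∈ Z ∧ y₀ < z}) = idxQ w := by
    refine le_antisymm (Nat.sInf_le ⟨w, ⟨hwZ, hy₀w⟩, rfl⟩) ?_
    have hne : (idxQ '' {z | z ∈ Z ∧ y₀ < z}).Nonempty := ⟨idxQ w, w, ⟨hwZ, hy₀w⟩, rfl⟩
    obtain ⟨z, ⟨hzZ, hz⟩, hzi⟩ := Nat.sInf_mem hne
    rw [← hzi]
    rcases hzZ with rfl | rfl | hzB | hzT
    · exact absurd hz (lt_irrefl _)
    · exact le_refl _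
    · exact absurd hz (not_lt_of_gt (hBprop z hzB).2.1)
    · exact le_of_lt hzT.2
  refine ⟨Z, hZY, qiso_sub ⟨e, he⟩ hZY hdiff, ?_⟩
  -- compute the color
  have hset : {i : ℕ | i < sInf (idxQ '' {z | z ∈ Z ∧ idxQ.symm (sInf (idxQ '' Z)) < z}) ∧
      idxQ.symm i ∈ Z ∧ idxQ.symm i < idxQ.symm (sInf (idxQ '' Z))} = idxQ '' ↑B := by
    rw [hz₀, hm]
    ext i
    simp only [Set.mem_setOf_eq, Set.mem_image]
    constructor
    · rintro ⟨hi, hiZ, hilt⟩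
      rcases hiZ with h | h | h | h
      · rw [h] at hilt; exact absurd hilt (lt_irrefl _)
      · exfalso
        have : i = idxQ w := by rw [← h, Equiv.apply_symm_apply]
        rw [this] at hi; exact lt_irrefl _ hi
      · exact ⟨idxQ.symm i, h, by rw [Equiv.apply_symm_apply]⟩
      · exfalso
        have := h.2
        rw [Equiv.apply_symm_apply] at this
        exact lt_irrefl _ (lt_trans hi this)
    · rintro ⟨b, hb, rfl⟩
      refine ⟨hsupB b hb, ?_, ?_⟩
      · rw [Equiv.symm_apply_apply]; exact Or.inr (Or.inr (Or.inl hb))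
      · rw [Equiv.symm_apply_apply]; exact (hBprop b hb).2.1
  rw [colQ, hset, Set.ncard_image_of_injective _ idxQ.injective, Set.ncard_coe_finset]
  exact hBcard
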